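/- For M ∈ [1,∞) and q ∈ (0,1) with 2M ≥ max{1/q, 1/(1−q)}, the golden-unit pair of qubit states π_M = (1−1/(2M))|0⟩⟨0| + (1/(2M))|1⟩⟨1| and σ_x π_M σ_x with prior (q, 1−q) has minimum error probability (1/2)(1 − |q − 1/(2M)| − |1−q − 1/(2M)|) = 1/(2M). -/

import Mathlib

open Matrix
open scoped ComplexOrder

/-- The golden-unit qubit state `π_M = (1−1/(2M))|0⟩⟨0| + (1/(2M))|1⟩⟨1|`. -/
noncomputable def piM (M : ℝ) : Matrix (Fin 2) (Fin 2) ℂ :=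
  !![((1 - 1 / (2 * M) : ℝ) : ℂ), 0; 0, ((1 / (2 * M) : ℝ) : ℂ)]

/-- The Pauli-x matrix. -/
def sigmaX : Matrix (Fin 2) (Fin 2) ℂ := !![0, 1; 1, 0]

/-- Minimum average error probability of binary state discrimination with prior `(q, 1−q)`. -/
noncomputable def perr {d : ℕ} (q : ℝ) (ρ₀ ρ₁ : Matrix (Fin d) (Fin d) ℂ) : ℝ :=
  sInf {x : ℝ | ∃ Λ : Matrix (Fin d) (Fin d) ℂ, Λ.PosSemidef ∧ (1 - Λ).PosSemidef ∧
    x = q * ((Λ * ρ₀).trace).re + (1 - q) * (((1 - Λ) * ρ₁).trace).re}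

lemma diag_entry_nonneg {d : ℕ} {Λ : Matrix (Fin d) (Fin d) ℂ} (h : Λ.PosSemidef)
    (i : Fin d) : 0 ≤ (Λ i i).re := by
  have := Complex.le_def.1 (h.diag_nonneg (i := i))
  simpa using this.1

lemma flip_eq (M : ℝ) : sigmaX * piM M * sigmaX =
    !![((1 / (2 * M) : ℝ) : ℂ), 0; 0, ((1 - 1 / (2 * M) : ℝ) : ℂ)] := by
  ext i j
  fin_cases i <;> fin_cases j <;>
    simp [sigmaX, piM, Matrix.mul_apply, Fin.sum_univ_two]

/-- For `M ∈ [1,∞)` and `q ∈ (0,1)` with `2M ≥ max{1/q, 1/(1−q)}`, the golden unit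
`(q, π_M, σ_x π_M σ_x)` has minimum error probability
`(1/2)(1 − |q − 1/(2M)| − |1−q − 1/(2M)|) = 1/(2M)`. -/
theorem golden_unit_perr (M q : ℝ) (hM : 1 ≤ M) (hq0 : 0 < q) (hq1 : q < 1)
    (h2M : max (1 / q) (1 / (1 - q)) ≤ 2 * M) :
    perr q (piM M) (sigmaX * piM M * sigmaX) = 1 / (2 * M) ∧
    (1 / 2) * (1 - |q - 1 / (2 * M)| - |1 - q - 1 / (2 * M)|) = 1 / (2 * M) := by
  have hM0 : (0:ℝ) < 2 * M := by linarith
  set b : ℝ := 1 / (2 * M) with hb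
  have hb0 : 0 < b := by positivity
  have hbq : b ≤ q := by
    rw [hb, div_le_iff₀ hM0]
    have h1 : 1 / q ≤ 2 * M := le_trans (le_max_left _ _) h2M
    calc 1 = q * (1/q) := by field_simp
    _ ≤ q * (2*M) := by nlinarith
  have hbq' : b ≤ 1 - q := by
    rw [hb, div_le_iff₀ hM0]
    have h1 : 1 / (1-q) ≤ 2 * M := le_trans (le_max_right _ _) h2M
    have h1q : 0 < 1 - q := by linarith
    calc 1 = (1-q) * (1/(1-q)) := by field_simp
    _ ≤ (1-q) * (2*M) := by nlinarith
  -- the set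
  set S : Set ℝ := {x : ℝ | ∃ Λ : Matrix (Fin 2) (Fin 2) ℂ, Λ.PosSemidef ∧ (1 - Λ).PosSemidef ∧
    x = q * ((Λ * piM M).trace).re + (1 - q) * (((1 - Λ) * (sigmaX * piM M * sigmaX)).trace).re}
    with hS
  have hval : ∀ x ∈ S, x = q * ((fun Λ : Matrix (Fin 2) (Fin 2) ℂ => 0) 0) + x := by
    intro x hx; ring
  -- general form of elements of S
  have hform : ∀ x ∈ S, ∃ u v : ℝ, 0 ≤ u ∧ u ≤ 1 ∧ 0 ≤ v ∧ v ≤ 1 ∧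
      x = q * (u * (1-b) + v * b) + (1 - q) * ((1 - u) * b + (1 - v) * (1-b)) := by
    rintro x ⟨Λ, hΛ, hΛ', rfl⟩
    refine ⟨(Λ 0 0).re, (Λ 1 1).re, diag_entry_nonneg hΛ 0, ?_, diag_entry_nonneg hΛ 1, ?_, ?_⟩
    · have := diag_entry_nonneg hΛ' 0
      simp at this; linarith
    · have := diag_entry_nonneg hΛ' 1
      simp at this; linarith
    · rw [flip_eq]
      simp [Matrix.trace_fin_two, Matrix.mul_apply, Fin.sum_univ_two, piM,
        Complex.mul_re, hb]
      try ring
  have hlb : ∀ x ∈ S, b ≤ x := by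
    intro x hx
    obtain ⟨u, v, hu0, hu1, hv0, hv1, rfl⟩ := hform x hx
    nlinarith [mul_nonneg hu0 (sub_nonneg.2 hbq), mul_nonneg (sub_nonneg.2 hv1) (sub_nonneg.2 hbq')]
  have hmem : b ∈ S := by
    refine ⟨Matrix.diagonal ![0, 1], ?_, ?_, ?_⟩
    · exact Matrix.PosSemidef.diagonal (by intro i; fin_cases i <;> simp)
    · have : (1 : Matrix (Fin 2) (Fin 2) ℂ) - Matrix.diagonal ![0,1]
          = Matrix.diagonal ![1, 0] := by
        ext i j; fin_cases i <;> fin_cases j <;>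
          simp [Matrix.diagonal, Matrix.one_apply]
      rw [this]
      exact Matrix.PosSemidef.diagonal (by intro i; fin_cases i <;> simp)
    · rw [flip_eq]
      simp [Matrix.trace_fin_two, Matrix.mul_apply, Fin.sum_univ_two, piM,
        Matrix.diagonal, Matrix.one_apply, Complex.mul_re, hb]
      ring
  have habs1 : |q - b| = q - b := abs_of_nonneg (by linarith)
  have habs2 : |1 - q - b| = 1 - q - b := abs_of_nonneg (by linarith)
  constructor
  · have : perr q (piM M) (sigmaX * piM M * sigmaX) = sInf S := rfl
    rw [this]
    apply le_antisymm
    · exact csInf_le ⟨b, hlb⟩ hmem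
    · exact le_csInf ⟨b, hmem⟩ hlb
  · rw [habs1, habs2]; ring
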